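/- Carnap categoricity of CPC over a set of worlds: Let W be a set and I an assignment to each connective ⊥, ∧, ∨, → of an operation of corresponding arity on the power set of W, such that whenever Γ ⊢_CPC φ, for all valuations v : Prop → P(W), the intersection of the values of Γ (computed compositionally via I) is contained in the value of φ. Then I(⊥) = ∅, I(∧) is intersection, I(∨) is union, and I(→)(U,V) = (W \ U) ∪ V. -/
import Mathlib


/-- Formulas of propositional logic over atoms ℕ. -/
inductive Form : Type where
  | atom : ℕ → Form
  | bot  : Form
  | and  : Form → Form → Form
  | or   : Form → Form → Form
  | imp  : Form → Form → Form

/-- Classical (two-valued) evaluation of a formula. -/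
def evalB (w : ℕ → Bool) : Form → Bool
  | Form.atom p => w p
  | Form.bot => false
  | Form.and φ ψ => evalB w φ && evalB w ψ
  | Form.or φ ψ => evalB w φ || evalB w ψ
  | Form.imp φ ψ => !evalB w φ || evalB w ψ

/-- Classical propositional consequence. -/
def CPC (Γ : Set Form) (φ : Form) : Prop :=
  ∀ w : ℕ → Bool, (∀ ψ ∈ Γ, evalB w ψ = true) → evalB w φ = true

/-- Compositional semantic value of a formula over a set of worlds W,
under an interpretation I of the connectives as operations on 𝒫(W). -/
def evalS {W : Type*} (Ibot : Set W) (Iand Ior Iimp : Set W → Set W → Set W)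
    (v : ℕ → Set W) : Form → Set W
  | Form.atom p => v p
  | Form.bot => Ibot
  | Form.and φ ψ => Iand (evalS Ibot Iand Ior Iimp v φ) (evalS Ibot Iand Ior Iimp v ψ)
  | Form.or φ ψ => Ior (evalS Ibot Iand Ior Iimp v φ) (evalS Ibot Iand Ior Iimp v ψ)
  | Form.imp φ ψ => Iimp (evalS Ibot Iand Ior Iimp v φ) (evalS Ibot Iand Ior Iimp v ψ)

/-- Carnap categoricity of CPC over a set of worlds W: any interpretation of the
connectives as operations on 𝒫(W) consistent with ⊢_CPC is the standard one. -/
theorem carnap_categoricity_CPC {W : Type*}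
    (Ibot : Set W) (Iand Ior Iimp : Set W → Set W → Set W)
    (hcons : ∀ (Γ : Set Form) (φ : Form), CPC Γ φ →
      ∀ v : ℕ → Set W,
        ⋂₀ (evalS Ibot Iand Ior Iimp v '' Γ) ⊆ evalS Ibot Iand Ior Iimp v φ) :
    Ibot = (∅ : Set W) ∧
    (∀ U V : Set W, Iand U V = U ∩ V) ∧
    (∀ U V : Set W, Ior U V = U ∪ V) ∧
    (∀ U V : Set W, Iimp U V = Uᶜ ∪ V) := by
  classical
  -- Ibot = ∅
  have hbot : Ibot = (∅ : Set W) := by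
    have h := hcons {Form.bot} (Form.atom 0)
      (by intro w h; have := h Form.bot rfl; simp [evalB] at this)
      (fun _ => (∅ : Set W))
    have h' : Ibot ⊆ ∅ := by simpa [evalS, Set.image_singleton] using h
    exact Set.eq_empty_of_subset_empty h'
  -- Iand
  have handl : ∀ U V : Set W, Iand U V ⊆ U := by
    intro U V
    have h := hcons {Form.and (Form.atom 0) (Form.atom 1)} (Form.atom 0)
      (by intro w h; have h1 := h _ rfl
          cases h0 : w 0 <;> cases h1' : w 1 <;> simp_all [evalB])
      (fun n => if n = 0 then U else V)
    simpa [evalS, Set.image_singleton] using h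
  have handr : ∀ U V : Set W, Iand U V ⊆ V := by
    intro U V
    have h := hcons {Form.and (Form.atom 0) (Form.atom 1)} (Form.atom 1)
      (by intro w h; have h1 := h _ rfl
          cases h0 : w 0 <;> cases h1' : w 1 <;> simp_all [evalB])
      (fun n => if n = 0 then U else V)
    simpa [evalS, Set.image_singleton] using h
  have handlo : ∀ U V : Set W, U ∩ V ⊆ Iand U V := by
    intro U V
    have h := hcons {Form.atom 0, Form.atom 1} (Form.and (Form.atom 0) (Form.atom 1))
      (by intro w h
          have h1 := h _ (Or.inl rfl); have h2 := h _ (Or.inr rfl)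
          simp_all [evalB])
      (fun n => if n = 0 then U else V)
    simpa [evalS, Set.image_insert_eq, Set.image_singleton] using h
  have hand : ∀ U V : Set W, Iand U V = U ∩ V := fun U V =>
    Set.Subset.antisymm (Set.subset_inter (handl U V) (handr U V)) (handlo U V)
  -- Iimp = univ when U ⊆ V
  have himpuniv : ∀ U V : Set W, U ⊆ V → Iimp U V = Set.univ := by
    intro U V hUV
    have h := hcons ∅ (Form.imp (Form.and (Form.atom 0) (Form.atom 1)) (Form.atom 1))
      (by intro w h; cases h0 : w 0 <;> cases h1 : w 1 <;> simp_all [evalB])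
      (fun n => if n = 0 then U else V)
    have h2 : Set.univ ⊆ Iimp (Iand U V) V := by
      simpa [evalS] using h
    rw [hand U V, Set.inter_eq_left.mpr hUV] at h2
    exact Set.eq_univ_of_univ_subset h2
  -- Iimp upper bound
  have himpup : ∀ U V : Set W, Iimp U V ⊆ Uᶜ ∪ V := by
    intro U V
    have h := hcons {Form.atom 0, Form.imp (Form.atom 0) (Form.atom 1)} (Form.atom 1)
      (by intro w h
          have h1 := h _ (Or.inl rfl); have h2 := h _ (Or.inr rfl)
          cases h0 : w 0 <;> cases h1' : w 1 <;> simp_all [evalB])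
      (fun n => if n = 0 then U else V)
    have h' : U ∩ Iimp U V ⊆ V := by
      simpa [evalS, Set.image_insert_eq, Set.image_singleton] using h
    intro x hx
    by_cases hxU : x ∈ U
    · exact Or.inr (h' ⟨hxU, hx⟩)
    · exact Or.inl hxU
  -- Iimp lower bound
  have himplo : ∀ U V : Set W, Uᶜ ∪ V ⊆ Iimp U V := by
    intro U V
    have h := hcons
      {Form.atom 2, Form.imp (Form.and (Form.atom 0) (Form.atom 2)) (Form.atom 1)}
      (Form.imp (Form.atom 0) (Form.atom 1))
      (by intro w h
          have h1 := h _ (Or.inl rfl); have h2 := h _ (Or.inr rfl)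
          cases h0 : w 0 <;> cases h1' : w 1 <;> cases h2' : w 2 <;> simp_all [evalB])
      (fun n => if n = 0 then U else if n = 1 then V else Uᶜ ∪ V)
    have h' : (Uᶜ ∪ V) ∩ Iimp (Iand U (Uᶜ ∪ V)) V ⊆ Iimp U V := by
      simpa [evalS, Set.image_insert_eq, Set.image_singleton] using h
    have hsub : U ∩ (Uᶜ ∪ V) ⊆ V := by
      intro x hx
      rcases hx with ⟨hxU, hc | hv⟩
      · exact absurd hxU hc
      · exact hv
    rw [hand, himpuniv (U ∩ (Uᶜ ∪ V)) V hsub, Set.inter_univ] at h'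
    exact h'
  have himp : ∀ U V : Set W, Iimp U V = Uᶜ ∪ V := fun U V =>
    Set.Subset.antisymm (himpup U V) (himplo U V)
  -- Ior lower bounds
  have horl : ∀ U V : Set W, U ⊆ Ior U V := by
    intro U V
    have h := hcons {Form.atom 0} (Form.or (Form.atom 0) (Form.atom 1))
      (by intro w h; have h1 := h _ rfl
          cases h0 : w 0 <;> cases h1' : w 1 <;> simp_all [evalB])
      (fun n => if n = 0 then U else V)
    simpa [evalS, Set.image_singleton] using h
  have horr : ∀ U V : Set W, V ⊆ Ior U V := by
    intro U V
    have h := hcons {Form.atom 1} (Form.or (Form.atom 0) (Form.atom 1))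
      (by intro w h; have h1 := h _ rfl
          cases h0 : w 0 <;> cases h1' : w 1 <;> simp_all [evalB])
      (fun n => if n = 0 then U else V)
    simpa [evalS, Set.image_singleton] using h
  -- Ior upper bound
  have horup : ∀ U V : Set W, Ior U V ⊆ U ∪ V := by
    intro U V
    have h := hcons
      {Form.or (Form.atom 0) (Form.atom 1),
       Form.imp (Form.atom 0) (Form.atom 2),
       Form.imp (Form.atom 1) (Form.atom 2)}
      (Form.atom 2)
      (by intro w h
          have h1 := h _ (Or.inl rfl)
          have h2 := h _ (Or.inr (Or.inl rfl))
          have h3 := h _ (Or.inr (Or.inr rfl))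
          cases h0 : w 0 <;> cases h1' : w 1 <;> cases h2' : w 2 <;> simp_all [evalB])
      (fun n => if n = 0 then U else if n = 1 then V else U ∪ V)
    have h' : Ior U V ∩ (Iimp U (U ∪ V) ∩ Iimp V (U ∪ V)) ⊆ U ∪ V := by
      simpa [evalS, Set.image_insert_eq, Set.image_singleton] using h
    rw [himpuniv U (U ∪ V) Set.subset_union_left,
        himpuniv V (U ∪ V) Set.subset_union_right] at h'
    simpa using h'
  exact ⟨hbot, hand, fun U V => Set.Subset.antisymm (horup U V)
    (Set.union_subset (horl U V) (horr U V)), himp⟩
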